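/- Let H₁ and H₂ be Hermitian matrices in ℂ^{n×n} and let φ : ℝ → ℝ be a convex differentiable function. Then Tr(φ(H₁) − φ(H₂) − (H₁ − H₂)·φ'(H₂)) ≥ 0, where φ(H) and φ'(H) are defined by functional calculus. -/

import Mathlib

open Matrix Finset

variable {n : ℕ}

/-- Functional calculus for a Hermitian matrix: apply `f : ℝ → ℝ` to the eigenvalues in an
orthonormal eigenbasis. -/
noncomputable def hermitianApply (f : ℝ → ℝ) (H : Matrix (Fin n) (Fin n) ℂ)
    (hH : H.IsHermitian) : Matrix (Fin n) (Fin n) ℂ :=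
  (hH.eigenvectorUnitary : Matrix (Fin n) (Fin n) ℂ) *
    diagonal (fun i => (f (hH.eigenvalues i) : ℂ)) *
    star (hH.eigenvectorUnitary : Matrix (Fin n) (Fin n) ℂ)

lemma tangent_le {φ φ' : ℝ → ℝ} (hconv : ConvexOn ℝ Set.univ φ)
    (hderiv : ∀ x : ℝ, HasDerivAt φ (φ' x) x) (a b : ℝ) :
    0 ≤ φ a - φ b - (a - b) * φ' b := by
  rcases lt_trichotomy a b with h | rfl | h
  · have := hconv.slope_le_of_hasDerivAt (Set.mem_univ a) (Set.mem_univ b) h (hderiv b)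
    rw [slope_def_field, div_le_iff₀ (by linarith)] at this
    nlinarith
  · simp
  · have := hconv.le_slope_of_hasDerivAt (Set.mem_univ b) (Set.mem_univ a) h (hderiv b)
    rw [slope_def_field, le_div_iff₀ (by linarith)] at this
    nlinarith

lemma trace_hermitianApply (f : ℝ → ℝ) (H : Matrix (Fin n) (Fin n) ℂ) (hH : H.IsHermitian) :
    Matrix.trace (hermitianApply f H hH) = ∑ i, (f (hH.eigenvalues i) : ℂ) := by
  rw [hermitianApply, trace_mul_cycle]
  rw [show (star (hH.eigenvectorUnitary : Matrix (Fin n) (Fin n) ℂ)) *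
      (hH.eigenvectorUnitary : Matrix (Fin n) (Fin n) ℂ) = 1 from
    Unitary.coe_star_mul_self hH.eigenvectorUnitary, one_mul, trace_diagonal]

lemma trace_helper (W : Matrix (Fin n) (Fin n) ℂ) (l m f : Fin n → ℝ) :
    Matrix.trace ((W * diagonal (fun i => (l i : ℂ)) * star W - diagonal (fun j => (m j : ℂ))) *
      diagonal (fun j => (f j : ℂ))) =
    ∑ j, (((∑ i, (Complex.normSq (W j i) : ℂ) * (l i : ℂ)) - (m j : ℂ)) * (f j : ℂ)) := by
  rw [Matrix.trace]
  refine Finset.sum_congr rfl fun j _ => ?_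
  simp only [diag_apply, Matrix.sub_apply, Matrix.mul_apply, Matrix.diagonal_apply, star_apply,
    ite_mul, zero_mul, mul_ite, mul_zero, Finset.sum_ite_eq, Finset.sum_ite_eq',
    Finset.mem_univ, if_true]
  congr 2
  refine Finset.sum_congr rfl fun i _ => ?_
  rw [mul_right_comm]
  simp [Complex.star_def, Complex.mul_conj]

/-- Klein inequality for Hermitian matrices: for Hermitian `H₁, H₂` and a convex
differentiable function `φ : ℝ → ℝ` (with derivative `φ'`),
`Tr(φ(H₁) − φ(H₂) − (H₁ − H₂)·φ'(H₂)) ≥ 0`. -/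
theorem klein_inequality (H₁ H₂ : Matrix (Fin n) (Fin n) ℂ)
    (h₁ : H₁.IsHermitian) (h₂ : H₂.IsHermitian)
    (φ φ' : ℝ → ℝ) (hconv : ConvexOn ℝ Set.univ φ)
    (hderiv : ∀ x : ℝ, HasDerivAt φ (φ' x) x) :
    0 ≤ (Matrix.trace (hermitianApply φ H₁ h₁ - hermitianApply φ H₂ h₂ -
      (H₁ - H₂) * hermitianApply φ' H₂ h₂)).re := by
  set U : Matrix (Fin n) (Fin n) ℂ := (h₁.eigenvectorUnitary : Matrix (Fin n) (Fin n) ℂ) with hU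
  set V : Matrix (Fin n) (Fin n) ℂ := (h₂.eigenvectorUnitary : Matrix (Fin n) (Fin n) ℂ) with hV
  set lam := h₁.eigenvalues with hlam
  set mu := h₂.eigenvalues with hmu
  have hUU : star U * U = 1 := Unitary.coe_star_mul_self h₁.eigenvectorUnitary
  have hUU' : U * star U = 1 := Unitary.coe_mul_star_self h₁.eigenvectorUnitary
  have hVV : star V * V = 1 := Unitary.coe_star_mul_self h₂.eigenvectorUnitary
  have hVV' : V * star V = 1 := Unitary.coe_mul_star_self h₂.eigenvectorUnitary
  set W : Matrix (Fin n) (Fin n) ℂ := star V * U with hW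
  set p : Fin n → Fin n → ℝ := fun j i => Complex.normSq (W j i) with hp
  have hWW : W * star W = 1 := by
    rw [hW, Matrix.star_mul, star_star, Matrix.mul_assoc, ← Matrix.mul_assoc U, hUU', one_mul, hVV]
  have hWW' : star W * W = 1 := by
    rw [hW, Matrix.star_mul, star_star, Matrix.mul_assoc, ← Matrix.mul_assoc V, hVV',
      one_mul, hUU]
  have hrow : ∀ j, ∑ i, p j i = 1 := by
    intro j
    have := congrArg (fun M => (M j j).re) hWW
    simp only [mul_apply, one_apply_eq, Complex.one_re, Complex.re_sum] at this
    rw [← this]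
    refine Finset.sum_congr rfl fun i _ => ?_
    rw [hp]
    simp [star_apply, Complex.mul_conj]
  have hcol : ∀ i, ∑ j, p j i = 1 := by
    intro i
    have := congrArg (fun M => (M i i).re) hWW'
    simp only [mul_apply, one_apply_eq, Complex.one_re, Complex.re_sum] at this
    rw [← this]
    refine Finset.sum_congr rfl fun j _ => ?_
    rw [hp]
    simp [star_apply, Complex.mul_conj, mul_comm]
  -- conjugations
  have hV2 : star V * H₂ * V = diagonal (fun j => (mu j : ℂ)) := by
    have := h₂.conjStarAlgAut_star_eigenvectorUnitary
    simp only [Unitary.conjStarAlgAut_star_apply] at this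
    exact this
  have hV1 : star V * H₁ * V = W * diagonal (fun i => (lam i : ℂ)) * star W := by
    have hs : star W = star U * V := by rw [hW, Matrix.star_mul, star_star]
    have hdiag : diagonal (RCLike.ofReal ∘ lam) = diagonal (fun i => (lam i : ℂ)) := rfl
    rw [h₁.spectral_theorem, Unitary.conjStarAlgAut_apply, hW, hs, ← hU, ← hlam, hdiag]
    simp only [Matrix.mul_assoc]
  have h3 : Matrix.trace ((H₁ - H₂) * hermitianApply φ' H₂ h₂) =
      ∑ j, (((∑ i, (p j i : ℂ) * (lam i : ℂ)) - (mu j : ℂ)) * (φ' (mu j) : ℂ)) := by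
    rw [hermitianApply]
    rw [show (H₁ - H₂) * ((h₂.eigenvectorUnitary : Matrix (Fin n) (Fin n) ℂ)
          * diagonal (fun i => (φ' (h₂.eigenvalues i) : ℂ))
          * star (h₂.eigenvectorUnitary : Matrix (Fin n) (Fin n) ℂ))
        = ((H₁ - H₂) * (V * diagonal (fun i => (φ' (mu i) : ℂ)))) * star V by
      rw [← hV, ← hmu]; simp only [Matrix.mul_assoc]]
    rw [trace_mul_comm, ← Matrix.mul_assoc, ← Matrix.mul_assoc]
    have hsub : star V * (H₁ - H₂) * V = W * diagonal (fun i => (lam i : ℂ)) * star W -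
        diagonal (fun j => (mu j : ℂ)) := by
      rw [← hV1, ← hV2, Matrix.mul_sub, Matrix.sub_mul]
    rw [hsub]
    simp only [hp]
    exact trace_helper W lam mu fun j => φ' (mu j)
  -- full trace as a real number
  have htr : (Matrix.trace (hermitianApply φ H₁ h₁ - hermitianApply φ H₂ h₂ -
      (H₁ - H₂) * hermitianApply φ' H₂ h₂)).re =
      ∑ i, φ (lam i) - ∑ j, φ (mu j) - ∑ j, ((∑ i, p j i * lam i) - mu j) * φ' (mu j) := by
    rw [trace_sub, trace_sub, trace_hermitianApply, trace_hermitianApply, h3]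
    simp [Complex.re_sum]
    rfl
  rw [htr]
  -- rearrange into a double sum
  have key : ∑ i, φ (lam i) - ∑ j, φ (mu j) - ∑ j, ((∑ i, p j i * lam i) - mu j) * φ' (mu j)
      = ∑ j, ∑ i, p j i * (φ (lam i) - φ (mu j) - (lam i - mu j) * φ' (mu j)) := by
    have e1 : ∑ i, φ (lam i) = ∑ j, ∑ i, p j i * φ (lam i) := by
      rw [Finset.sum_comm]
      refine Finset.sum_congr rfl fun i _ => ?_
      rw [← Finset.sum_mul, hcol, one_mul]
    have e2 : ∑ j, φ (mu j) = ∑ j, ∑ i, p j i * φ (mu j) := by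
      refine Finset.sum_congr rfl fun j _ => ?_
      rw [← Finset.sum_mul, hrow, one_mul]
    have e3 : ∀ j, ((∑ i, p j i * lam i) - mu j) * φ' (mu j)
        = ∑ i, p j i * (lam i - mu j) * φ' (mu j) := by
      intro j
      rw [← Finset.sum_mul]
      congr 1
      have : ∑ i, p j i * (lam i - mu j) = ∑ i, p j i * lam i - (∑ i, p j i) * mu j := by
        rw [Finset.sum_mul, ← Finset.sum_sub_distrib]
        exact Finset.sum_congr rfl fun i _ => by ring
      rw [this, hrow, one_mul]
    rw [e1, e2]
    simp only [e3 ]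
    rw [← Finset.sum_sub_distrib, ← Finset.sum_sub_distrib]
    refine Finset.sum_congr rfl fun j _ => ?_
    rw [← Finset.sum_sub_distrib, ← Finset.sum_sub_distrib]
    exact Finset.sum_congr rfl fun i _ => by ring
  rw [key]
  refine Finset.sum_nonneg fun j _ => Finset.sum_nonneg fun i _ => ?_
  exact mul_nonneg (Complex.normSq_nonneg _) (tangent_le hconv hderiv _ _)
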